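/- Let ε > 0 and m ≥ 1 be given, and let n ∈ ℕ satisfy n ≥ max{8m²/π², 2/ε}. Then there exist pairwise distinct indices ι_1, …, ι_m ∈ {1, …, n} such that the equispaced segments s_{ι_i} = [x_{ι_i−1}, x_{ι_i}] of S^eq_n satisfy x_i^CF ∈ s_{ι_i} and |s_{ι_i}| ≤ ε for all i = 1, …, m; i.e., the m Chebyshev nodes lie in m pairwise distinct equispaced segments, each of length at most ε. -/
import Mathlib


open Real Set Polynomial

set_option maxHeartbeats 1000000

/-- Quasi-nodal mock-Chebyshev segments (Lemma 2): if `n ≥ max{8m²/π², 2/ε}`, the `m`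
Chebyshev nodes `x_i^CF = cos((2i-1)π/(2m))` lie in `m` pairwise distinct equispaced
segments of `S^eq_n`, each of length at most `ε`. Here the segment of index `ι i : Fin n`
is `[-1 + 2ι i/n, -1 + 2(ι i + 1)/n]`. -/
theorem stmt_10 (ε : ℝ) (hε : 0 < ε) (m : ℕ) (hm : 1 ≤ m) (n : ℕ)
    (hn : max (8 * (m : ℝ) ^ 2 / π ^ 2) (2 / ε) ≤ (n : ℝ)) :
    ∃ ι : Fin m → Fin n, Function.Injective ι ∧
      (∀ i : Fin m, Real.cos ((2 * (i : ℝ) + 1) * π / (2 * m)) ∈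
        Set.Icc (-1 + 2 * (ι i : ℝ) / n) (-1 + 2 * ((ι i : ℝ) + 1) / n)) ∧
      2 / (n : ℝ) ≤ ε := by
  have hπ := Real.pi_pos
  have hm' : (1:ℝ) ≤ m := by exact_mod_cast hm
  have hmpos : (0:ℝ) < m := by linarith
  have hnpos : (0:ℝ) < n := by
    have h0 : (0:ℝ) < 8 * (m:ℝ)^2 / π^2 := by positivity
    have := le_trans (le_max_left _ _) hn
    linarith
  have hnε : 2 / (n : ℝ) ≤ ε := by
    have h2 : 2/ε ≤ (n:ℝ) := le_trans (le_max_right _ _) hn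
    rw [div_le_iff₀ hnpos]
    rw [div_le_iff₀ hε] at h2
    nlinarith
  have hseg : 2 / (n:ℝ) ≤ π^2 / (4 * m^2) := by
    have h1 : 8 * (m:ℝ)^2 / π^2 ≤ n := le_trans (le_max_left _ _) hn
    rw [div_le_div_iff₀ hnpos (by positivity)]
    rw [div_le_iff₀ (by positivity)] at h1
    nlinarith
  -- the Chebyshev angles
  set θ : Fin m → ℝ := fun i => (2 * (i:ℝ) + 1) * π / (2 * m) with hθ
  have hident : ∀ i : Fin m, (2 * (i:ℝ) + 1) * π / (2 * m) = θ i := fun i => by rw [hθ]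
  have hθpos : ∀ i : Fin m, 0 < θ i := by
    intro i
    have h0 : (0:ℝ) ≤ (i:ℝ) := Nat.cast_nonneg _
    rw [hθ]
    positivity
  have hθlt : ∀ i : Fin m, θ i < π := by
    intro i
    have hi : (i:ℝ) + 1 ≤ (m:ℝ) := by exact_mod_cast Nat.succ_le_of_lt i.is_lt
    rw [hθ]
    simp only
    rw [div_lt_iff₀ (by positivity)]
    nlinarith
  have hy1 : ∀ i : Fin m, Real.cos (θ i) < 1 := by
    intro i
    have := Real.cos_lt_cos_of_nonneg_of_le_pi le_rfl (hθlt i).le (hθpos i)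
    simpa using this
  have hy0 : ∀ i : Fin m, -1 ≤ Real.cos (θ i) := fun i => Real.neg_one_le_cos _
  have hkey : ∀ i : Fin m, (0:ℝ) ≤ (n:ℝ) * (Real.cos (θ i) + 1) / 2 := by
    intro i; have := hy0 i; nlinarith
  have hklt : ∀ i : Fin m, ⌊(n:ℝ) * (Real.cos (θ i) + 1) / 2⌋₊ < n := by
    intro i
    have h1 : (n:ℝ) * (Real.cos (θ i) + 1) / 2 < n := by nlinarith [hy1 i, hy0 i]
    exact (Nat.floor_lt (hkey i)).mpr (by exact_mod_cast h1)
  -- membership of each node in its segment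
  have hmem : ∀ i : Fin m, Real.cos (θ i) ∈
      Set.Icc (-1 + 2 * ((⌊(n:ℝ) * (Real.cos (θ i) + 1) / 2⌋₊ : ℕ) : ℝ) / n)
        (-1 + 2 * (((⌊(n:ℝ) * (Real.cos (θ i) + 1) / 2⌋₊ : ℕ) : ℝ) + 1) / n) := by
    intro i
    set t := (n:ℝ) * (Real.cos (θ i) + 1) / 2 with ht
    have h1 : (⌊t⌋₊ : ℝ) ≤ t := Nat.floor_le (hkey i)
    have h2 : t < (⌊t⌋₊ : ℝ) + 1 := Nat.lt_floor_add_one t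
    constructor
    · have h4 : 2 * (⌊t⌋₊:ℝ) / n ≤ Real.cos (θ i) + 1 := by
        rw [div_le_iff₀ hnpos]
        linarith [h1, ht.le, ht.ge]
      linarith
    · have h4 : Real.cos (θ i) + 1 ≤ 2 * ((⌊t⌋₊:ℝ) + 1) / n := by
        rw [le_div_iff₀ hnpos]
        linarith [h2, ht.le, ht.ge]
      linarith
  -- gap estimate between distinct Chebyshev nodes (for m ≥ 2)
  have hgap : ∀ i j : Fin m, (i:ℕ) < (j:ℕ) →
      4 / (m:ℝ)^2 ≤ Real.cos (θ i) - Real.cos (θ j) := by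
    intro i j hlt
    have hiR : (i:ℝ) + 1 ≤ (j:ℝ) := by exact_mod_cast Nat.succ_le_of_lt hlt
    have hjR : (j:ℝ) + 1 ≤ (m:ℝ) := by exact_mod_cast Nat.succ_le_of_lt j.is_lt
    have hi0 : (0:ℝ) ≤ (i:ℝ) := Nat.cast_nonneg _
    have hcc : Real.cos (θ i) - Real.cos (θ j)
        = 2 * Real.sin ((θ i + θ j) / 2) * Real.sin ((θ j - θ i) / 2) := by
      rw [Real.cos_sub_cos]
      have h : Real.sin ((θ i - θ j) / 2) = -Real.sin ((θ j - θ i) / 2) := by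
        rw [← Real.sin_neg]; ring_nf
      rw [h]; ring
    set a := (θ i + θ j) / 2 with ha
    set b := (θ j - θ i) / 2 with hb
    have hbval : b = ((j:ℝ) - i) * π / (2 * m) := by
      rw [hb, hθ]; field_simp; ring
    have haval : a = ((i:ℝ) + j + 1) * π / (2 * m) := by
      rw [ha, hθ]; field_simp; ring
    have hb1 : π / (2 * m) ≤ b := by
      rw [hbval, div_le_div_iff₀ (by positivity) (by positivity)]
      nlinarith [mul_nonneg (mul_nonneg (by linarith : (0:ℝ) ≤ (j:ℝ) - (i:ℝ) - 1) hπ.le)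
        (by positivity : (0:ℝ) ≤ 2 * (m:ℝ))]
    have hb2 : b ≤ π / 2 := by
      rw [hbval, div_le_div_iff₀ (by positivity) (by norm_num)]
      nlinarith [mul_nonneg (by linarith : (0:ℝ) ≤ (m:ℝ) - ((j:ℝ) - (i:ℝ))) hπ.le]
    have hb0 : 0 ≤ b := le_trans (by positivity) hb1
    have hsinb : 1 / (m:ℝ) ≤ Real.sin b := by
      have hms := Real.mul_le_sin hb0 hb2
      have h3 : 1 / (m:ℝ) ≤ 2 / π * b := by
        rw [div_le_iff₀ hmpos]
        have hmul : 2 / π * (π / (2 * m)) ≤ 2 / π * b :=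
          mul_le_mul_of_nonneg_left hb1 (by positivity)
        calc (1:ℝ) = 2 / π * (π / (2 * m)) * m := by field_simp
          _ ≤ 2 / π * b * m := by nlinarith [hmul]
      linarith
    have ha1 : π / m ≤ a := by
      rw [haval, div_le_div_iff₀ hmpos (by positivity)]
      nlinarith [mul_nonneg (mul_nonneg (by linarith : (0:ℝ) ≤ (i:ℝ) + (j:ℝ) + 1 - 2) hπ.le)
        hmpos.le]
    have ha2 : a ≤ π - π / m := by
      rw [haval, div_le_iff₀ (by positivity)]
      have hπm : π / (m:ℝ) * m = π := div_mul_cancel₀ π hmpos.ne'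
      nlinarith [mul_nonneg (by linarith : (0:ℝ) ≤ 2 * (m:ℝ) - 2 - ((i:ℝ) + (j:ℝ) + 1)) hπ.le]
    have hsina : 2 / (m:ℝ) ≤ Real.sin a := by
      have key : ∀ z : ℝ, π / m ≤ z → z ≤ π / 2 → 2 / (m:ℝ) ≤ Real.sin z := by
        intro z h1 h2
        have h0 : 0 ≤ z := le_trans (by positivity) h1
        have hms := Real.mul_le_sin h0 h2
        have h3 : 2 / (m:ℝ) ≤ 2 / π * z := by
          rw [div_le_iff₀ hmpos]
          have hmul : 2 / π * (π / m) ≤ 2 / π * z :=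
            mul_le_mul_of_nonneg_left h1 (by positivity)
          calc (2:ℝ) = 2 / π * (π / m) * m := by field_simp
            _ ≤ 2 / π * z * m := by nlinarith [hmul]
        linarith
      rcases le_or_gt a (π / 2) with h | h
      · exact key a ha1 h
      · rw [← Real.sin_pi_sub a]
        exact key _ (by linarith) (by linarith)
    rw [hcc]
    have hsina0 : 0 ≤ Real.sin a := le_trans (by positivity) hsina
    have hmul := mul_le_mul hsina hsinb (by positivity) hsina0
    have heqq : 4 / (m:ℝ)^2 = 2 * (2 / m * (1 / m)) := by
      field_simp
      ring
    linarith
  refine ⟨fun i => ⟨⌊(n:ℝ) * (Real.cos (θ i) + 1) / 2⌋₊, hklt i⟩, ?_, ?_, hnε⟩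
  · -- injectivity
    intro i j hij
    by_contra hne
    -- both cosines lie in the same segment of length 2/n
    have heq : ⌊(n:ℝ) * (Real.cos (θ i) + 1) / 2⌋₊ = ⌊(n:ℝ) * (Real.cos (θ j) + 1) / 2⌋₊ :=
      Fin.mk.inj_iff.mp hij
    have hclose : ∀ i' j' : Fin m,
        ⌊(n:ℝ) * (Real.cos (θ i') + 1) / 2⌋₊ = ⌊(n:ℝ) * (Real.cos (θ j') + 1) / 2⌋₊ →
        Real.cos (θ i') - Real.cos (θ j') ≤ 2 / n := by
      intro i' j' he
      have h1 := (hmem i').2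
      have h2 := (hmem j').1
      rw [he] at h1
      set k := ((⌊(n:ℝ) * (Real.cos (θ j') + 1) / 2⌋₊ : ℕ) : ℝ)
      have : Real.cos (θ i') - Real.cos (θ j')
          ≤ (-1 + 2 * (k + 1) / n) - (-1 + 2 * k / n) := by
        exact sub_le_sub h1 h2
      calc Real.cos (θ i') - Real.cos (θ j')
          ≤ (-1 + 2 * (k + 1) / n) - (-1 + 2 * k / n) := this
        _ = 2 / n := by field_simp; ring
    have hpi4 : π < 3.15 := Real.pi_lt_d2
    have hlarge : 2 / (n:ℝ) < 4 / (m:ℝ)^2 := by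
      have hπ2 : π^2 < 10 := by nlinarith [hpi4, hπ]
      have : π^2 / (4 * m^2) < 4 / (m:ℝ)^2 := by
        rw [div_lt_div_iff₀ (by positivity) (by positivity)]
        nlinarith [mul_pos hmpos hmpos, hπ2]
      linarith
    rcases lt_trichotomy (i:ℕ) (j:ℕ) with h | h | h
    · have := hgap i j h
      have := hclose i j heq
      linarith
    · exact hne (Fin.ext h)
    · have := hgap j i h
      have := hclose j i heq.symm
      linarith
  · -- membership
    intro i
    rw [hident i]
    exact hmem i
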